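/- Let α ∈ (0,1], β ≥ 1 − 1/α, and for k ≥ 0 define L x^k = k Φ_{α,β}(k) x^{k−1} − k x^k where Φ_{α,β}(k) = Γ(αk+αβ+1)/Γ(αk+αβ+1−α). Then for every k ≥ 0, ∫_0^∞ (L x^k) e_{α,β}(x) dx = 0, where e_{α,β}(x) = x^{β+1/α−1} e^{−x^{1/α}}/Γ(αβ+1). -/

import Mathlib

open Real MeasureTheory

theorem gaussLaguerre_invariant_on_monomials (α β : ℝ) (hα : α ∈ Set.Ioc (0:ℝ) 1)
    (hβ : 1 - 1/α ≤ β) (k : ℕ) :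
    ∫ x in Set.Ioi (0:ℝ),
        ((k : ℝ) * (Real.Gamma (α*k + α*β + 1) / Real.Gamma (α*k + α*β + 1 - α))
            * x ^ (k - 1) - (k : ℝ) * x ^ k)
          * (x ^ (β + 1/α - 1) * Real.exp (-(x ^ (1/α))) / Real.Gamma (α*β + 1))
      = 0 := by
  obtain ⟨hα0, hα1⟩ := hα
  obtain _ | n := k
  · simp
  set k : ℕ := n + 1
  have hp0 : (0:ℝ) < 1/α := by positivity
  have hp1 : (1:ℝ) ≤ 1/α := by
    rw [le_div_iff₀ hα0]; linarith
  set q1 : ℝ := (n:ℝ) + (β + 1/α - 1) with hq1def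
  set q2 : ℝ := (k:ℝ) + (β + 1/α - 1) with hq2def
  have hβ' : (0:ℝ) ≤ β + 1/α - 1 := by linarith
  have hq1 : (-1:ℝ) < q1 := by
    have : (0:ℝ) ≤ (n:ℝ) := Nat.cast_nonneg n
    simp only [hq1def]; linarith
  have hq2 : (-1:ℝ) < q2 := by
    have : (0:ℝ) ≤ (k:ℝ) := Nat.cast_nonneg k
    simp only [hq2def]; linarith
  set C1 : ℝ := (k : ℝ) * (Real.Gamma (α*k + α*β + 1) / Real.Gamma (α*k + α*β + 1 - α))
  set G : ℝ := Real.Gamma (α*β + 1)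
  have hcongr : ∀ x ∈ Set.Ioi (0:ℝ),
      ((k : ℝ) * (Real.Gamma (α*k + α*β + 1) / Real.Gamma (α*k + α*β + 1 - α))
            * x ^ (k - 1) - (k : ℝ) * x ^ k)
          * (x ^ (β + 1/α - 1) * Real.exp (-(x ^ (1/α))) / G)
        = (C1/G) * (x ^ q1 * Real.exp (-(x ^ (1/α))))
          - ((k:ℝ)/G) * (x ^ q2 * Real.exp (-(x ^ (1/α)))) := by
    intro x hx
    have hx0 : (0:ℝ) < x := hx
    have h1 : x ^ q1 = x ^ (n:ℕ) * x ^ (β + 1/α - 1) := by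
      rw [hq1def, Real.rpow_add hx0, Real.rpow_natCast]
    have h2 : x ^ q2 = x ^ (k:ℕ) * x ^ (β + 1/α - 1) := by
      rw [hq2def, Real.rpow_add hx0, Real.rpow_natCast]
    have hk1 : k - 1 = n := rfl
    rw [hk1, h1, h2]
    ring
  rw [setIntegral_congr_fun measurableSet_Ioi hcongr]
  have hi1 : IntegrableOn (fun x : ℝ => x ^ q1 * Real.exp (-(x ^ (1/α)))) (Set.Ioi 0) :=
    integrableOn_rpow_mul_exp_neg_rpow hq1 hp0
  have hi2 : IntegrableOn (fun x : ℝ => x ^ q2 * Real.exp (-(x ^ (1/α)))) (Set.Ioi 0) :=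
    integrableOn_rpow_mul_exp_neg_rpow hq2 hp0
  rw [integral_sub (hi1.const_mul _) (hi2.const_mul _)]
  rw [integral_const_mul, integral_const_mul,
    integral_rpow_mul_exp_neg_rpow hp0 hq1, integral_rpow_mul_exp_neg_rpow hp0 hq2]
  have hA : (q1 + 1) / (1/α) = α*k + α*β + 1 - α := by
    rw [hq1def]; push_cast [k]; field_simp; ring
  have hB : (q2 + 1) / (1/α) = α*k + α*β + 1 := by
    rw [hq2def]; field_simp; ring
  rw [hA, hB]
  have hBpos : 0 < Real.Gamma (α*k + α*β + 1 - α) := by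
    apply Real.Gamma_pos_of_pos
    have hn : (0:ℝ) ≤ (n:ℝ) := Nat.cast_nonneg n
    have hk : (k:ℝ) = (n:ℝ) + 1 := by push_cast [k]; ring
    have hαβ : α * β ≥ α - 1 := by
      have := mul_le_mul_of_nonneg_left hβ (le_of_lt hα0)
      nlinarith
    nlinarith
  have hGpos : 0 < G := by
    apply Real.Gamma_pos_of_pos
    have hαβ : α * β ≥ α - 1 := by
      have := mul_le_mul_of_nonneg_left hβ (le_of_lt hα0)
      nlinarith
    nlinarith
  simp only [C1]
  have hBne := hBpos.ne'
  field_simp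
  ring_nf at hBne ⊢
  rw [mul_inv_cancel_right₀ hBne]
  ring
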